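/- In the bilocal scenario (three parties A, B, C with binary inputs x, y, z ∈ Fin 2 and binary outputs a, b, c ∈ Fin 2, where source 1 connects A and B and source 2 connects B and C), every bilocal behavior P(abc|xyz) — i.e., every behavior of the form P(abc|xyz) = ∫∫ R_A(a|x,λ₁) R_B(b|y,λ₁,λ₂) R_C(c|z,λ₂) dρ₁(λ₁) dρ₂(λ₂) for some probability measures ρ₁, ρ₂ on measurable spaces Ω₁, Ω₂ and measurable, nonnegative, output-normalized response functions — can be reproduced by a bilocal model in which the first hidden variable takes at most 4 values: there exist a probability distribution w on Fin 4, deterministic strategies for Alice indexed by Fin 4, and a (possibly modified) response function for B, with Ω₂ and ρ₂ unchanged, realizing the same P. -/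

import Mathlib

open MeasureTheory

/-- A measurable function with values in `[0,1]` on a finite measure space is integrable. -/
lemma integrable_of_bd {α : Type*} [MeasurableSpace α] (μ : Measure α) [IsFiniteMeasure μ]
    {f : α → ℝ} (hm : Measurable f) (h0 : ∀ x, 0 ≤ f x) (h1 : ∀ x, f x ≤ 1) :
    Integrable f μ := by
  refine ⟨hm.aestronglyMeasurable, ?_⟩
  apply HasFiniteIntegral.of_bounded (C := (1 : ℝ))
  filter_upwards with x
  rw [Real.norm_eq_abs, abs_of_nonneg (h0 x)]
  exact h1 x

/-- **Cardinality 4 for the first source of the bilocal scenario.** Every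
bilocal behavior `P(abc|xyz)` can be reproduced by a bilocal model in which the
first hidden variable takes at most 4 values: there exist a probability
distribution `w` on `Fin 4`, deterministic strategies `DA : Fin 4 → Fin 2 → Fin 2`
for Alice, and a (possibly modified) response function `RB'` for Bob, with `Ω₂`
and `ρ₂` unchanged, realizing the same `P`. -/
theorem bilocal_first_source_four_values
    (Ω₁ Ω₂ : Type) [MeasurableSpace Ω₁] [MeasurableSpace Ω₂]
    (ρ₁ : Measure Ω₁) (ρ₂ : Measure Ω₂)
    [IsProbabilityMeasure ρ₁] [IsProbabilityMeasure ρ₂]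
    (RA : Fin 2 → Fin 2 → Ω₁ → ℝ)
    (RB : Fin 2 → Fin 2 → Ω₁ → Ω₂ → ℝ)
    (RC : Fin 2 → Fin 2 → Ω₂ → ℝ)
    (hRAmeas : ∀ a x, Measurable (RA a x))
    (hRBmeas : ∀ b y, Measurable (Function.uncurry (RB b y)))
    (hRCmeas : ∀ c z, Measurable (RC c z))
    (hRApos : ∀ a x l₁, 0 ≤ RA a x l₁)
    (hRBpos : ∀ b y l₁ l₂, 0 ≤ RB b y l₁ l₂)
    (hRCpos : ∀ c z l₂, 0 ≤ RC c z l₂)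
    (hRAnorm : ∀ x l₁, ∑ a, RA a x l₁ = 1)
    (hRBnorm : ∀ y l₁ l₂, ∑ b, RB b y l₁ l₂ = 1)
    (hRCnorm : ∀ z l₂, ∑ c, RC c z l₂ = 1)
    (P : Fin 2 → Fin 2 → Fin 2 → Fin 2 → Fin 2 → Fin 2 → ℝ)
    (hP : ∀ a b c x y z, P a b c x y z =
      ∫ l₁, ∫ l₂, RA a x l₁ * RB b y l₁ l₂ * RC c z l₂ ∂ρ₂ ∂ρ₁) :
    ∃ (w : Fin 4 → ℝ) (DA : Fin 4 → Fin 2 → Fin 2)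
      (RB' : Fin 2 → Fin 2 → Fin 4 → Ω₂ → ℝ),
      (∀ k, 0 ≤ w k) ∧ (∑ k, w k = 1) ∧
      (∀ b y k, Measurable (RB' b y k)) ∧
      (∀ b y k l₂, 0 ≤ RB' b y k l₂) ∧
      (∀ y k l₂, ∑ b, RB' b y k l₂ = 1) ∧
      ∀ a b c x y z, P a b c x y z =
        ∑ k : Fin 4, w k *
          ∫ l₂, (if DA k x = a then (1 : ℝ) else 0) * RB' b y k l₂ * RC c z l₂ ∂ρ₂ := by
  classical
  -- pointwise bounds by 1
  have hRA1 : ∀ a x l₁, RA a x l₁ ≤ 1 := by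
    intro a x l₁
    calc RA a x l₁ ≤ ∑ a', RA a' x l₁ :=
          Finset.single_le_sum (fun i _ => hRApos i x l₁) (Finset.mem_univ a)
      _ = 1 := hRAnorm x l₁
  have hRB1 : ∀ b y l₁ l₂, RB b y l₁ l₂ ≤ 1 := by
    intro b y l₁ l₂
    calc RB b y l₁ l₂ ≤ ∑ b', RB b' y l₁ l₂ :=
          Finset.single_le_sum (fun i _ => hRBpos i y l₁ l₂) (Finset.mem_univ b)
      _ = 1 := hRBnorm y l₁ l₂
  have hRC1 : ∀ c z l₂, RC c z l₂ ≤ 1 := by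
    intro c z l₂
    calc RC c z l₂ ≤ ∑ c', RC c' z l₂ :=
          Finset.single_le_sum (fun i _ => hRCpos i z l₂) (Finset.mem_univ c)
      _ = 1 := hRCnorm z l₂
  -- deterministic strategies
  set DA : Fin 4 → Fin 2 → Fin 2 := ![![0, 0], ![0, 1], ![1, 0], ![1, 1]] with hDA
  set q : Fin 4 → Ω₁ → ℝ := fun k l₁ => RA (DA k 0) 0 l₁ * RA (DA k 1) 1 l₁ with hq
  have hqmeas : ∀ k, Measurable (q k) := fun k => (hRAmeas _ _).mul (hRAmeas _ _)
  have hqpos : ∀ k l₁, 0 ≤ q k l₁ := fun k l₁ => mul_nonneg (hRApos _ _ _) (hRApos _ _ _)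
  have hq1 : ∀ k l₁, q k l₁ ≤ 1 := fun k l₁ =>
    mul_le_one₀ (hRA1 _ _ _) (hRApos _ _ _) (hRA1 _ _ _)
  have hqint : ∀ k, Integrable (q k) ρ₁ := fun k =>
    integrable_of_bd ρ₁ (hqmeas k) (hqpos k) (hq1 k)
  -- key pointwise identity
  have hkey1 : ∀ (a x : Fin 2) (l₁ : Ω₁),
      ∑ k : Fin 4, (if DA k x = a then (1 : ℝ) else 0) * q k l₁ = RA a x l₁ := by
    intro a x l₁
    have h0 := hRAnorm 0 l₁
    have h1 := hRAnorm 1 l₁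
    rw [Fin.sum_univ_two] at h0 h1
    have d00 : DA 0 0 = 0 := rfl
    have d01 : DA 0 1 = 0 := rfl
    have d10 : DA 1 0 = 0 := rfl
    have d11 : DA 1 1 = 1 := rfl
    have d20 : DA 2 0 = 1 := rfl
    have d21 : DA 2 1 = 0 := rfl
    have d30 : DA 3 0 = 1 := rfl
    have d31 : DA 3 1 = 1 := rfl
    fin_cases x <;> fin_cases a <;>
      simp [Fin.sum_univ_four, hq, Fin.mk_zero, Fin.mk_one,
        d00, d01, d10, d11, d20, d21, d30, d31] <;>
      first
        | linear_combination RA 0 0 l₁ * h1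
        | linear_combination RA 1 0 l₁ * h1
        | linear_combination RA 0 1 l₁ * h0
        | linear_combination RA 1 1 l₁ * h0
  have hqsum : ∀ l₁ : Ω₁, ∑ k : Fin 4, q k l₁ = 1 := by
    intro l₁
    have h0 := hRAnorm 0 l₁
    have h1 := hRAnorm 1 l₁
    rw [Fin.sum_univ_two] at h0 h1
    have d00 : DA 0 0 = 0 := rfl
    have d01 : DA 0 1 = 0 := rfl
    have d10 : DA 1 0 = 0 := rfl
    have d11 : DA 1 1 = 1 := rfl
    have d20 : DA 2 0 = 1 := rfl
    have d21 : DA 2 1 = 0 := rfl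
    have d30 : DA 3 0 = 1 := rfl
    have d31 : DA 3 1 = 1 := rfl
    simp only [Fin.sum_univ_four, hq, d00, d01, d10, d11, d20, d21, d30, d31]
    linear_combination (RA 0 0 l₁ + RA 1 0 l₁) * h1 + h0
  -- weights
  set w : Fin 4 → ℝ := fun k => ∫ l₁, q k l₁ ∂ρ₁ with hw
  have hwpos : ∀ k, 0 ≤ w k := fun k => integral_nonneg (hqpos k)
  have hwsum : ∑ k, w k = 1 := by
    rw [hw, ← integral_finset_sum _ (fun k _ => hqint k)]
    simp [hqsum]
  -- conditioned responses
  set G : Fin 2 → Fin 2 → Fin 4 → Ω₂ → ℝ :=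
    fun b y k l₂ => ∫ l₁, q k l₁ * RB b y l₁ l₂ ∂ρ₁ with hG
  have hprodmeas : ∀ b y k,
      Measurable (Function.uncurry fun l₁ l₂ => q k l₁ * RB b y l₁ l₂) := by
    intro b y k
    exact ((hqmeas k).comp measurable_fst).mul (hRBmeas b y)
  have hGmeas : ∀ b y k, Measurable (G b y k) := by
    intro b y k
    exact ((hprodmeas b y k).stronglyMeasurable.integral_prod_left).measurable
  have hqRBint : ∀ b y k l₂, Integrable (fun l₁ => q k l₁ * RB b y l₁ l₂) ρ₁ := by
    intro b y k l₂
    refine integrable_of_bd ρ₁ ((hqmeas k).mul (hRBmeas b y).of_uncurry_right)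
      (fun l₁ => mul_nonneg (hqpos k l₁) (hRBpos b y l₁ l₂))
      (fun l₁ => mul_le_one₀ (hq1 k l₁) (hRBpos b y l₁ l₂) (hRB1 b y l₁ l₂))
  have hGpos : ∀ b y k l₂, 0 ≤ G b y k l₂ := fun b y k l₂ =>
    integral_nonneg fun l₁ => mul_nonneg (hqpos k l₁) (hRBpos b y l₁ l₂)
  have hG1 : ∀ b y k l₂, G b y k l₂ ≤ 1 := by
    intro b y k l₂
    calc G b y k l₂ ≤ ∫ _ : Ω₁, (1 : ℝ) ∂ρ₁ := by
          refine integral_mono (hqRBint b y k l₂) (integrable_const 1) fun l₁ =>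
            mul_le_one₀ (hq1 k l₁) (hRBpos b y l₁ l₂) (hRB1 b y l₁ l₂)
      _ = 1 := by simp
  have hGsum : ∀ y k l₂, ∑ b, G b y k l₂ = w k := by
    intro y k l₂
    rw [← integral_finset_sum _ (fun b _ => hqRBint b y k l₂)]
    simp only [← Finset.mul_sum, hRBnorm, mul_one]
    rfl
  set RB' : Fin 2 → Fin 2 → Fin 4 → Ω₂ → ℝ :=
    fun b y k l₂ => if w k = 0 then (1 / 2 : ℝ) else G b y k l₂ / w k with hRB'
  -- key identity : w k * RB' = G
  have hkey2 : ∀ b y k l₂, w k * RB' b y k l₂ = G b y k l₂ := by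
    intro b y k l₂
    by_cases h : w k = 0
    · have hq0 : q k =ᵐ[ρ₁] 0 :=
        (integral_eq_zero_iff_of_nonneg (fun l₁ => hqpos k l₁) (hqint k)).1 h
      have : G b y k l₂ = 0 := by
        rw [hG]
        simp only
        rw [← integral_zero Ω₁ ℝ (μ := ρ₁)]
        refine integral_congr_ae ?_
        filter_upwards [hq0] with l₁ hl₁
        simp [hl₁]
      rw [h, this, zero_mul]
    · simp [hRB', h, mul_div_cancel₀ _ h]
  refine ⟨w, DA, RB', hwpos, hwsum, ?_, ?_, ?_, ?_⟩
  · intro b y k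
    by_cases h : w k = 0 <;> simp only [hRB', h, if_true, if_false]
    · exact measurable_const
    · exact (hGmeas b y k).div_const _
  · intro b y k l₂
    by_cases h : w k = 0 <;> simp only [hRB', h, if_true, if_false]
    · norm_num
    · exact div_nonneg (hGpos b y k l₂) (hwpos k)
  · intro y k l₂
    by_cases h : w k = 0 <;> simp only [hRB', h, if_true, if_false]
    · simp [Fin.sum_univ_two]
    · rw [← Finset.sum_div, hGsum, div_self h]
  · intro a b c x y z
    -- rewrite each summand of the RHS using G
    have hGint : ∀ k, Integrable
        (fun l₂ => (if DA k x = a then (1 : ℝ) else 0) * G b y k l₂ * RC c z l₂) ρ₂ := by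
      intro k
      by_cases h : DA k x = a
      · simp only [h, if_true, one_mul]
        exact integrable_of_bd ρ₂ ((hGmeas b y k).mul (hRCmeas c z))
          (fun l₂ => mul_nonneg (hGpos b y k l₂) (hRCpos c z l₂))
          (fun l₂ => mul_le_one₀ (hG1 b y k l₂) (hRCpos c z l₂) (hRC1 c z l₂))
      · simp only [h, if_false, zero_mul]
        exact integrable_zero _ _ _
    have hstep : ∀ k : Fin 4,
        w k * ∫ l₂, (if DA k x = a then (1 : ℝ) else 0) * RB' b y k l₂ * RC c z l₂ ∂ρ₂
          = ∫ l₂, (if DA k x = a then (1 : ℝ) else 0) * G b y k l₂ * RC c z l₂ ∂ρ₂ := by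
      intro k
      rw [← integral_const_mul]
      refine integral_congr_ae (Filter.Eventually.of_forall fun l₂ => ?_)
      by_cases h : DA k x = a
      · simp only [h, if_true, one_mul]
        calc w k * (RB' b y k l₂ * RC c z l₂)
            = (w k * RB' b y k l₂) * RC c z l₂ := by ring
          _ = G b y k l₂ * RC c z l₂ := by rw [hkey2]
      · simp [h]
    rw [Finset.sum_congr rfl fun k _ => hstep k,
      ← integral_finset_sum _ (fun k _ => hGint k)]
    -- now compute the LHS via Fubini
    have hintprod : Integrable
        (Function.uncurry fun l₁ l₂ => RA a x l₁ * RB b y l₁ l₂ * RC c z l₂)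
        (ρ₁.prod ρ₂) := by
      refine integrable_of_bd _ ?_ ?_ ?_
      · exact (((hRAmeas a x).comp measurable_fst).mul (hRBmeas b y)).mul
          ((hRCmeas c z).comp measurable_snd)
      · exact fun p => mul_nonneg (mul_nonneg (hRApos _ _ _) (hRBpos _ _ _ _)) (hRCpos _ _ _)
      · exact fun p => mul_le_one₀
          (mul_le_one₀ (hRA1 _ _ _) (hRBpos _ _ _ _) (hRB1 _ _ _ _))
          (hRCpos _ _ _) (hRC1 _ _ _)
    rw [hP a b c x y z, integral_integral_swap hintprod]
    refine integral_congr_ae (Filter.Eventually.of_forall fun l₂ => ?_)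
    -- pointwise in l₂
    have hinner : ∑ k : Fin 4, (if DA k x = a then (1 : ℝ) else 0) * G b y k l₂
        = ∫ l₁, RA a x l₁ * RB b y l₁ l₂ ∂ρ₁ := by
      have : ∀ k : Fin 4, (if DA k x = a then (1 : ℝ) else 0) * G b y k l₂
          = ∫ l₁, (if DA k x = a then (1 : ℝ) else 0) * (q k l₁ * RB b y l₁ l₂) ∂ρ₁ := by
        intro k; rw [integral_const_mul]
      rw [Finset.sum_congr rfl fun k _ => this k, ← integral_finset_sum _
        (fun k _ => ((hqRBint b y k l₂).const_mul _))]
      refine integral_congr_ae (Filter.Eventually.of_forall fun l₁ => ?_)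
      have := hkey1 a x l₁
      calc ∑ k : Fin 4, (if DA k x = a then (1 : ℝ) else 0) * (q k l₁ * RB b y l₁ l₂)
          = (∑ k : Fin 4, (if DA k x = a then (1 : ℝ) else 0) * q k l₁) * RB b y l₁ l₂ := by
            rw [Finset.sum_mul]; exact Finset.sum_congr rfl fun k _ => by ring
        _ = RA a x l₁ * RB b y l₁ l₂ := by rw [hkey1 a x l₁]
    calc ∫ l₁, RA a x l₁ * RB b y l₁ l₂ * RC c z l₂ ∂ρ₁
        = (∫ l₁, RA a x l₁ * RB b y l₁ l₂ ∂ρ₁) * RC c z l₂ := integral_mul_const _ _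
      _ = (∑ k : Fin 4, (if DA k x = a then (1 : ℝ) else 0) * G b y k l₂) * RC c z l₂ := by
            rw [hinner]
      _ = ∑ k : Fin 4, (if DA k x = a then (1 : ℝ) else 0) * G b y k l₂ * RC c z l₂ := by
            rw [Finset.sum_mul]
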